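/- Let B be an N×N skew-symmetric integer matrix. Then B defines a cluster mutation-periodic quiver with period 1, i.e. μ_1(B)_{j,k} = B_{j-1,k-1} for all j,k (indices taken modulo N in {1,…,N}, equivalently μ_1(B) = ρ B ρ^{-1} where ρ is the permutation matrix of the cyclic shift i ↦ i+1 mod N), if and only if the entries of B satisfy: (i) b_{j,N} = b_{1,j+1} for j = 1,…,N-1, and (ii) b_{j+1,k+1} = b_{j,k} + b_{1,j+1}[-b_{1,k+1}]_+ - b_{1,k+1}[-b_{1,j+1}]_+ for 1 ≤ j,k ≤ N-1. -/

import Mathlib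

open Matrix

/-- The matrix mutation `μ_k` of an `N × N` integer matrix `B`:
`b̃_{jℓ} = -b_{jℓ}` if `j = k` or `ℓ = k`, and otherwise
`b̃_{jℓ} = b_{jℓ} + (|b_{jk}| b_{kℓ} + b_{jk} |b_{kℓ}|)/2`. -/
def matrixMutation {N : ℕ} (k : Fin N) (B : Matrix (Fin N) (Fin N) ℤ) :
    Matrix (Fin N) (Fin N) ℤ :=
  fun j ℓ =>
    if j = k ∨ ℓ = k then -B j ℓ
    else B j ℓ + (|B j k| * B k ℓ + B j k * |B k ℓ|) / 2


lemma zero_sub_one_eq_last (n : ℕ) : (0 : Fin (n + 1)) - 1 = Fin.last n := by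
  apply Fin.ext
  simp [Fin.sub_def, Fin.last, Nat.mod_eq_of_lt]

lemma add_one_ne_zero_of_ne_last {n : ℕ} {j : Fin (n + 1)} (h : j ≠ Fin.last n) :
    j + 1 ≠ 0 := by
  intro hc
  apply h
  have : j = 0 - 1 := by rw [← hc]; exact (add_sub_cancel_right j 1).symm
  rw [this, zero_sub_one_eq_last]

lemma sub_one_ne_last_of_ne_zero {n : ℕ} {j : Fin (n + 1)} (h : j ≠ 0) :
    j - 1 ≠ Fin.last n := by
  intro hc
  apply h
  have : j = Fin.last n + 1 := by rw [← hc]; exact (sub_add_cancel j 1).symm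
  rw [this, ← zero_sub_one_eq_last]; exact sub_add_cancel _ _

lemma mutation_key (a b : ℤ) :
    (|(-a)| * b + (-a) * |b|) / 2 = b * max (-a) 0 - a * max (-b) 0 := by
  have h : |(-a)| * b + (-a) * |b| = 2 * (b * max (-a) 0 - a * max (-b) 0) := by
    rcases le_total a 0 with ha | ha <;> rcases le_total b 0 with hb | hb
    · rw [abs_of_nonneg (by omega : (0:ℤ) ≤ -a), abs_of_nonpos hb,
        max_eq_left (by omega), max_eq_left (by omega)]; ring
    · rw [abs_of_nonneg (by omega : (0:ℤ) ≤ -a), abs_of_nonneg hb,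
        max_eq_left (by omega), max_eq_right (by omega)]; ring
    · rw [abs_of_nonpos (by omega : -a ≤ (0:ℤ)), abs_of_nonpos hb,
        max_eq_right (by omega), max_eq_left (by omega)]; ring
    · rw [abs_of_nonpos (by omega : -a ≤ (0:ℤ)), abs_of_nonneg hb,
        max_eq_right (by omega), max_eq_right (by omega)]; ring
  rw [h, Int.mul_ediv_cancel_left _ two_ne_zero]

/-- A skew-symmetric integer matrix `B` (indices `0,…,n` corresponding to the paper's
`1,…,N` with `N = n+1`) defines a cluster mutation-periodic quiver with period 1,
i.e. `μ_1(B)_{j,k} = B_{j-1,k-1}` with indices taken cyclically (equivalently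
`μ_1(B) = ρ B ρ⁻¹` for the cyclic shift `ρ`), if and only if
(i) `b_{j,N} = b_{1,j+1}` for `j = 1,…,N-1`, and
(ii) `b_{j+1,k+1} = b_{j,k} + b_{1,j+1}[-b_{1,k+1}]₊ - b_{1,k+1}[-b_{1,j+1}]₊`
for `1 ≤ j,k ≤ N-1`, where `[b]₊ = max b 0`. -/
theorem period_one_iff {n : ℕ} (B : Matrix (Fin (n + 1)) (Fin (n + 1)) ℤ)
    (hB : Bᵀ = -B) :
    (∀ j k : Fin (n + 1), matrixMutation 0 B j k = B (j - 1) (k - 1)) ↔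
      ((∀ j : Fin (n + 1), j ≠ Fin.last n → B j (Fin.last n) = B 0 (j + 1)) ∧
        (∀ j k : Fin (n + 1), j ≠ Fin.last n → k ≠ Fin.last n →
          B (j + 1) (k + 1) =
            B j k + B 0 (j + 1) * max (-B 0 (k + 1)) 0
              - B 0 (k + 1) * max (-B 0 (j + 1)) 0)) := by
  have hskew : ∀ j k, B k j = -B j k := by
    intro j k
    have := congrFun (congrFun hB j) k
    simpa using this
  constructor
  · intro H
    constructor
    · intro j _
      have h := H 0 (j + 1)
      rw [matrixMutation, if_pos (Or.inl rfl), zero_sub_one_eq_last,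
        add_sub_cancel_right, hskew j (Fin.last n)] at h
      omega
    · intro j k hj hk
      have h := H (j + 1) (k + 1)
      rw [matrixMutation,
        if_neg (by push_neg; exact ⟨add_one_ne_zero_of_ne_last hj,
          add_one_ne_zero_of_ne_last hk⟩),
        add_sub_cancel_right, add_sub_cancel_right,
        hskew 0 (j + 1), mutation_key] at h
      omega
  · rintro ⟨h1, h2⟩ j k
    rw [matrixMutation]
    by_cases hj : j = 0
    · subst hj
      rw [if_pos (Or.inl rfl), zero_sub_one_eq_last]
      by_cases hk : k = 0
      · subst hk
        rw [zero_sub_one_eq_last]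
        have h0 := hskew 0 0
        have hl := hskew (Fin.last n) (Fin.last n)
        omega
      · have := h1 (k - 1) (sub_one_ne_last_of_ne_zero hk)
        rw [sub_add_cancel] at this
        rw [hskew (k - 1) (Fin.last n), this]
    · by_cases hk : k = 0
      · subst hk
        rw [if_pos (Or.inr rfl), zero_sub_one_eq_last]
        have := h1 (j - 1) (sub_one_ne_last_of_ne_zero hj)
        rw [sub_add_cancel] at this
        rw [this, hskew j 0]
      · rw [if_neg (by push_neg; exact ⟨hj, hk⟩)]
        have := h2 (j - 1) (k - 1) (sub_one_ne_last_of_ne_zero hj)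
          (sub_one_ne_last_of_ne_zero hk)
        rw [sub_add_cancel, sub_add_cancel] at this
        rw [hskew 0 j, mutation_key]
        omega
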